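/- Let 0 < p < 1 and ε ∈ (0,1). The infinite Toeplitz matrix T = {1/(ε + j − k)}_{j,k ≥ 0} is not a bounded Schur multiplier of the Schatten ideal L_p: sup over finite submatrices of ‖·‖_{m_p} is infinite. -/

import Mathlib

set_option linter.unusedSectionVars false
set_option maxHeartbeats 1000000
set_option synthInstance.maxHeartbeats 1000000


open scoped ENNReal

noncomputable section

namespace Paper

variable {H : Type*} [NormedAddCommGroup H] [InnerProductSpace ℂ H] [CompleteSpace H]

/-- The `j`-th singular value (approximation number) of a bounded operator. -/
noncomputable def sv (T : H →L[ℂ] H) (j : ℕ) : ℝ :=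
  sInf ((fun R : H →L[ℂ] H => ‖T - R‖) ''
    {R | Module.finrank ℂ (LinearMap.range (R : H →ₗ[ℂ] H)) ≤ j})

/-- The Schatten `p`-quasi-norm. -/
noncomputable def snorm (p : ℝ) (T : H →L[ℂ] H) : ℝ :=
  (∑' j, sv T j ^ p) ^ (1 / p)

/-- Membership in the Schatten ideal `L_p`. -/
def MemLp (p : ℝ) (T : H →L[ℂ] H) : Prop :=
  IsCompactOperator T ∧ Summable fun j => sv T j ^ p

/-- Schatten `p`-quasi-norm of a matrix. -/
noncomputable def msnorm (p : ℝ) {n : Type*} [Fintype n] [DecidableEq n]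
    (A : Matrix n n ℂ) : ℝ :=
  snorm p (Matrix.toEuclideanCLM (𝕜 := ℂ) A)

/-- The `L_p` Schur multiplier norm of a finite matrix. -/
noncomputable def schurNorm (p : ℝ) {n : Type*} [Fintype n] [DecidableEq n]
    (A : Matrix n n ℂ) : ℝ :=
  sSup {x | ∃ B : Matrix n n ℂ, msnorm p B ≤ 1 ∧ x = msnorm p (A.hadamard B)}

/-- The `L_p` Schur multiplier norm of a matrix indexed by arbitrary sets:
the supremum of the `m_p` norms of all finite submatrices. -/
noncomputable def schurNormInf (p : ℝ) {I J : Type*} (A : I → J → ℂ) : ℝ≥0∞ :=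
  ⨆ (n : ℕ) (r : Fin n → I) (c : Fin n → J),
    ENNReal.ofReal (schurNorm p (Matrix.of fun i j => A (r i) (c j)))

/-- `f(A)`: functional calculus of a self-adjoint operator applied to `f : ℝ → ℂ`. -/
noncomputable def opFun (f : ℝ → ℂ) (A : H →L[ℂ] H) : H →L[ℂ] H :=
  cfc (fun z : ℂ => f z.re) A

/-- `f` is `L_p`-operator Lipschitz with constant `C`. -/
def OpLipschitzWith (p : ℝ) (C : ℝ) (f : ℝ → ℂ) : Prop :=
  ∀ (K : Type) [NormedAddCommGroup K] [InnerProductSpace ℂ K] [CompleteSpace K],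
    ∀ A B : K →L[ℂ] K, IsSelfAdjoint A → IsSelfAdjoint B → MemLp p (A - B) →
      snorm p (opFun f A - opFun f B) ≤ C * snorm p (A - B)

/-- Hölder class `C^β`. -/
def memHolderClass (β : ℝ) (f : ℝ → ℂ) : Prop :=
  ContDiff ℝ (⌊β⌋₊ : ℕ) f ∧
    ∃ C : NNReal, HolderWith C (Real.toNNReal (β - ⌊β⌋₊)) (iteratedDeriv ⌊β⌋₊ f)

/-- Diagonal projection matrix associated to a set of indices. -/
noncomputable def diagProj {n : Type*} [Fintype n] [DecidableEq n] (S : Set n) :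
    Matrix n n ℂ :=
  Matrix.diagonal (S.indicator fun _ => 1)




/-! ### Auxiliary lemmas -/

lemma zero_mem_svset (j : ℕ) :
    (0 : H →L[ℂ] H) ∈ {R : H →L[ℂ] H | Module.finrank ℂ (LinearMap.range (R : H →ₗ[ℂ] H)) ≤ j} := by
  have : LinearMap.range ((0 : H →L[ℂ] H) : H →ₗ[ℂ] H) = ⊥ := by
    ext x; simp [eq_comm]
  show Module.finrank ℂ (LinearMap.range ((0 : H →L[ℂ] H) : H →ₗ[ℂ] H)) ≤ j
  rw [this, finrank_bot]; exact Nat.zero_le j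

lemma svset_nonempty (T : H →L[ℂ] H) (j : ℕ) :
    ((fun R : H →L[ℂ] H => ‖T - R‖) ''
      {R | Module.finrank ℂ (LinearMap.range (R : H →ₗ[ℂ] H)) ≤ j}).Nonempty :=
  ⟨‖T‖, 0, zero_mem_svset j, by simp⟩

lemma svset_bddBelow (T : H →L[ℂ] H) (j : ℕ) :
    BddBelow ((fun R : H →L[ℂ] H => ‖T - R‖) ''
      {R | Module.finrank ℂ (LinearMap.range (R : H →ₗ[ℂ] H)) ≤ j}) :=
  ⟨0, by rintro x ⟨R, -, rfl⟩; exact norm_nonneg _⟩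

lemma sv_nonneg (T : H →L[ℂ] H) (j : ℕ) : 0 ≤ sv T j :=
  le_csInf (svset_nonempty T j) (by rintro x ⟨R, -, rfl⟩; exact norm_nonneg _)

lemma sv_le (T R : H →L[ℂ] H) (j : ℕ)
    (hR : Module.finrank ℂ (LinearMap.range (R : H →ₗ[ℂ] H)) ≤ j) : sv T j ≤ ‖T - R‖ :=
  csInf_le (svset_bddBelow T j) ⟨R, hR, rfl⟩

lemma sv_le_norm (T : H →L[ℂ] H) (j : ℕ) : sv T j ≤ ‖T‖ := by
  simpa using sv_le T 0 j (by simpa using zero_mem_svset (H := H) j)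

lemma le_sv (T : H →L[ℂ] H) (j : ℕ) (c : ℝ)
    (h : ∀ R : H →L[ℂ] H, Module.finrank ℂ (LinearMap.range (R : H →ₗ[ℂ] H)) ≤ j → c ≤ ‖T - R‖) :
    c ≤ sv T j :=
  le_csInf (svset_nonempty T j) (by rintro x ⟨R, hR, rfl⟩; exact h R hR)

lemma sv_eq_zero [FiniteDimensional ℂ H] (T : H →L[ℂ] H) (j : ℕ)
    (h : Module.finrank ℂ H ≤ j) : sv T j = 0 :=
  le_antisymm (by simpa using sv_le T T j (le_trans (Submodule.finrank_le _) h)) (sv_nonneg T j)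

lemma finrank_range_add [FiniteDimensional ℂ H] (R1 R2 : H →L[ℂ] H) :
    Module.finrank ℂ (LinearMap.range ((R1 + R2 : H →L[ℂ] H) : H →ₗ[ℂ] H)) ≤
      Module.finrank ℂ (LinearMap.range (R1 : H →ₗ[ℂ] H)) + Module.finrank ℂ (LinearMap.range (R2 : H →ₗ[ℂ] H)) := by
  have hle : LinearMap.range ((R1 + R2 : H →L[ℂ] H) : H →ₗ[ℂ] H) ≤ LinearMap.range (R1 : H →ₗ[ℂ] H) ⊔ LinearMap.range (R2 : H →ₗ[ℂ] H) := by
    rintro x ⟨y, rfl⟩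
    exact Submodule.mem_sup.2 ⟨R1 y, ⟨y, rfl⟩, R2 y, ⟨y, rfl⟩, rfl⟩
  refine le_trans (Submodule.finrank_mono hle) ?_
  have := Submodule.finrank_sup_add_finrank_inf_eq (LinearMap.range (R1 : H →ₗ[ℂ] H)) (LinearMap.range (R2 : H →ₗ[ℂ] H))
  omega

lemma sv_add_le [FiniteDimensional ℂ H] (X Y : H →L[ℂ] H) (j k : ℕ) :
    sv (X + Y) (j + k) ≤ sv X j + sv Y k := by
  rw [← sub_le_iff_le_add]
  refine le_csInf (svset_nonempty X j) ?_
  rintro a ⟨R1, hR1, rfl⟩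
  rw [sub_le_iff_le_add, ← sub_le_iff_le_add']
  refine le_csInf (svset_nonempty Y k) ?_
  rintro b ⟨R2, hR2, rfl⟩
  rw [sub_le_iff_le_add']
  calc sv (X + Y) (j + k) ≤ ‖(X + Y) - (R1 + R2)‖ :=
        sv_le _ _ _ (le_trans (finrank_range_add R1 R2) (add_le_add hR1 hR2))
    _ ≤ ‖X - R1‖ + ‖Y - R2‖ := by
        rw [show (X + Y) - (R1 + R2) = (X - R1) + (Y - R2) by abel]
        exact norm_add_le _ _
    _ = ‖Y - R2‖ + ‖X - R1‖ := add_comm _ _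
    _ ≤ _ := le_of_eq (add_comm _ _)

lemma norm_le_sv_smul_one [FiniteDimensional ℂ H] (c : ℂ) (j : ℕ)
    (hj : j < Module.finrank ℂ H) :
    ‖c‖ ≤ sv (c • (1 : H →L[ℂ] H)) j := by
  refine le_sv _ _ _ (fun R hR => ?_)
  have hrn := LinearMap.finrank_range_add_finrank_ker (R : H →ₗ[ℂ] H)
  have hRR : Module.finrank ℂ (LinearMap.range (R : H →ₗ[ℂ] H)) ≤ j := hR
  have hker0 : LinearMap.ker (R : H →ₗ[ℂ] H) ≠ ⊥ := by
    intro hbot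
    rw [hbot, finrank_bot] at hrn
    omega
  obtain ⟨v, hv, hv0⟩ := Submodule.exists_mem_ne_zero_of_ne_bot hker0
  have hRv : R v = 0 := LinearMap.mem_ker.mp hv
  have h1 : (c • (1 : H →L[ℂ] H) - R) v = c • v := by
    simp [ContinuousLinearMap.sub_apply, hRv]
  have h2 : ‖(c • (1 : H →L[ℂ] H) - R) v‖ ≤ ‖c • (1 : H →L[ℂ] H) - R‖ * ‖v‖ :=
    ContinuousLinearMap.le_opNorm _ _
  rw [h1, norm_smul] at h2
  have hv0' : (0:ℝ) < ‖v‖ := norm_pos_iff.mpr hv0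
  exact le_of_mul_le_mul_right h2 hv0'

lemma coord_norm_le {N : ℕ} (v : EuclideanSpace ℂ (Fin N)) (i : Fin N) : ‖v i‖ ≤ ‖v‖ := by
  rw [EuclideanSpace.norm_eq]
  have h1 : ‖v i‖ = Real.sqrt (‖v i‖ ^ 2) := by
    rw [Real.sqrt_sq (norm_nonneg _)]
  rw [h1]
  exact Real.sqrt_le_sqrt (Finset.single_le_sum (f := fun k => ‖v k‖^2)
    (fun k _ => by positivity) (Finset.mem_univ i))

lemma sum_norm_le {N : ℕ} (x : EuclideanSpace ℂ (Fin N)) :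
    ∑ j, ‖x j‖ ≤ Real.sqrt N * ‖x‖ := by
  have h := sq_sum_le_card_mul_sum_sq (s := (Finset.univ : Finset (Fin N)))
    (f := fun j => ‖x j‖)
  have h2 : (∑ j, ‖x j‖) = Real.sqrt ((∑ j, ‖x j‖) ^ 2) := by
    rw [Real.sqrt_sq (Finset.sum_nonneg fun j _ => norm_nonneg _)]
  rw [h2]
  calc Real.sqrt ((∑ j, ‖x j‖) ^ 2) ≤ Real.sqrt (N * ∑ j, ‖x j‖ ^ 2) := by
        refine Real.sqrt_le_sqrt ?_
        simpa using h
    _ = Real.sqrt N * Real.sqrt (∑ j, ‖x j‖ ^ 2) := Real.sqrt_mul (Nat.cast_nonneg N) _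
    _ = Real.sqrt N * ‖x‖ := by rw [← EuclideanSpace.norm_eq]

lemma entry_norm_le_opNorm {N : ℕ} (M : Matrix (Fin N) (Fin N) ℂ) (i j : Fin N) :
    ‖M i j‖ ≤ ‖Matrix.toEuclideanCLM (𝕜 := ℂ) M‖ := by
  set T := Matrix.toEuclideanCLM (𝕜 := ℂ) M with hT
  have h1 : M i j = T (EuclideanSpace.single j 1) i := by
    show M i j = ∑ k, M i k * (EuclideanSpace.single j (1:ℂ)) k
    simp [EuclideanSpace.single_apply]
  rw [h1]
  calc ‖T (EuclideanSpace.single j 1) i‖ ≤ ‖T (EuclideanSpace.single j 1)‖ := coord_norm_le _ i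
    _ ≤ ‖T‖ * ‖(EuclideanSpace.single j (1:ℂ))‖ := T.le_opNorm _
    _ = ‖T‖ := by rw [EuclideanSpace.norm_single]; simp

lemma opNorm_le_card_mul_bound {N : ℕ} (M : Matrix (Fin N) (Fin N) ℂ) (c : ℝ) (hc : 0 ≤ c)
    (h : ∀ i j, ‖M i j‖ ≤ c) : ‖Matrix.toEuclideanCLM (𝕜 := ℂ) M‖ ≤ N * c := by
  refine ContinuousLinearMap.opNorm_le_bound _ (by positivity) (fun x => ?_)
  have key : ∀ i : Fin N, ‖(Matrix.toEuclideanCLM (𝕜 := ℂ) M x) i‖ ≤ c * (Real.sqrt N * ‖x‖) := by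
    intro i
    calc ‖∑ j, M i j * x j‖ ≤ ∑ j, ‖M i j * x j‖ := norm_sum_le _ _
      _ ≤ ∑ j, c * ‖x j‖ := by
          refine Finset.sum_le_sum (fun j _ => ?_)
          rw [norm_mul]
          exact mul_le_mul_of_nonneg_right (h i j) (norm_nonneg _)
      _ = c * ∑ j, ‖x j‖ := by rw [Finset.mul_sum]
      _ ≤ c * (Real.sqrt N * ‖x‖) := mul_le_mul_of_nonneg_left (sum_norm_le x) hc
  have hnn : (0:ℝ) ≤ c * (Real.sqrt N * ‖x‖) := by positivity
  calc ‖Matrix.toEuclideanCLM (𝕜 := ℂ) M x‖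
      = Real.sqrt (∑ i, ‖(Matrix.toEuclideanCLM (𝕜 := ℂ) M x) i‖ ^ 2) :=
        EuclideanSpace.norm_eq _
    _ ≤ Real.sqrt (∑ _i : Fin N, (c * (Real.sqrt N * ‖x‖)) ^ 2) := by
        refine Real.sqrt_le_sqrt (Finset.sum_le_sum (fun i _ => ?_))
        exact pow_le_pow_left₀ (norm_nonneg _) (key i) 2
    _ = Real.sqrt N * (c * (Real.sqrt N * ‖x‖)) := by
        rw [Finset.sum_const, Finset.card_univ, Fintype.card_fin, nsmul_eq_mul,
          Real.sqrt_mul (Nat.cast_nonneg N), Real.sqrt_sq hnn]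
    _ = Real.sqrt N * Real.sqrt N * (c * ‖x‖) := by ring
    _ = N * c * ‖x‖ := by
        rw [Real.mul_self_sqrt (Nat.cast_nonneg N)]; ring

lemma sv_eq_zero_of_rank_le (T : H →L[ℂ] H) (j : ℕ)
    (h : Module.finrank ℂ (LinearMap.range (T : H →ₗ[ℂ] H)) ≤ j) : sv T j = 0 :=
  le_antisymm (by simpa using sv_le T T j h) (sv_nonneg T j)

lemma sv_rpow_summable [FiniteDimensional ℂ H] (T : H →L[ℂ] H) {p : ℝ} (hp : p ≠ 0) :
    Summable (fun j => sv T j ^ p) :=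
  summable_of_ne_finset_zero (s := Finset.range (Module.finrank ℂ H)) (fun b hb => by
    rw [sv_eq_zero T b (by simpa using Finset.mem_range.not.mp hb), Real.zero_rpow hp])

lemma sv_zero_eq_norm [FiniteDimensional ℂ H] (T : H →L[ℂ] H) : sv T 0 = ‖T‖ := by
  refine le_antisymm (sv_le_norm T 0) (le_sv T 0 _ (fun R hR => ?_))
  have hbot : LinearMap.range (R : H →ₗ[ℂ] H) = ⊥ := Submodule.finrank_eq_zero.mp (Nat.le_zero.mp hR)
  have hR0 : R = 0 := by
    ext x
    have : R x ∈ LinearMap.range (R : H →ₗ[ℂ] H) := LinearMap.mem_range_self (R : H →ₗ[ℂ] H) x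
    rw [hbot, Submodule.mem_bot] at this
    simpa using this
  rw [hR0, sub_zero]

lemma norm_le_snorm [FiniteDimensional ℂ H] {p : ℝ} (hp : 0 < p) (T : H →L[ℂ] H) :
    ‖T‖ ≤ snorm p T := by
  have h1 : ‖T‖ ^ p ≤ ∑' j, sv T j ^ p := by
    have := Summable.sum_le_tsum (f := fun j => sv T j ^ p) ({0} : Finset ℕ)
      (fun b _ => Real.rpow_nonneg (sv_nonneg T b) p) (sv_rpow_summable T hp.ne')
    simpa [sv_zero_eq_norm] using this
  have h2 : (‖T‖ ^ p) ^ (1/p) ≤ snorm p T :=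
    Real.rpow_le_rpow (Real.rpow_nonneg (norm_nonneg T) p) h1 (by positivity)
  rwa [← Real.rpow_mul (norm_nonneg T), mul_one_div_cancel hp.ne', Real.rpow_one] at h2

lemma snorm_le_of_norm_le [FiniteDimensional ℂ H] {p : ℝ} (hp : 0 < p) (T : H →L[ℂ] H)
    {b : ℝ} (hb : ‖T‖ ≤ b) :
    snorm p T ≤ ((Module.finrank ℂ H : ℝ)) ^ (1/p) * b := by
  have hb0 : 0 ≤ b := le_trans (norm_nonneg T) hb
  set n := Module.finrank ℂ H
  have h1 : ∑' j, sv T j ^ p ≤ (n : ℝ) * b ^ p := by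
    rw [tsum_eq_sum (s := Finset.range n) (fun b hb => by
      rw [sv_eq_zero T b (by simpa using Finset.mem_range.not.mp hb), Real.zero_rpow hp.ne'])]
    calc ∑ j ∈ Finset.range n, sv T j ^ p ≤ ∑ _j ∈ Finset.range n, b ^ p :=
          Finset.sum_le_sum (fun j _ => Real.rpow_le_rpow (sv_nonneg T j)
            (le_trans (sv_le_norm T j) hb) hp.le)
      _ = (n : ℝ) * b ^ p := by rw [Finset.sum_const, Finset.card_range, nsmul_eq_mul]
  calc snorm p T ≤ ((n : ℝ) * b ^ p) ^ (1/p) := by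
        refine Real.rpow_le_rpow (tsum_nonneg (fun j => Real.rpow_nonneg (sv_nonneg T j) p))
          h1 (by positivity)
    _ = (n : ℝ) ^ (1/p) * b := by
        rw [Real.mul_rpow (Nat.cast_nonneg n) (Real.rpow_nonneg hb0 p),
          ← Real.rpow_mul hb0, mul_one_div_cancel hp.ne', Real.rpow_one]

lemma le_snorm_of_sv_ge [FiniteDimensional ℂ H] {p : ℝ} (hp : 0 < p) (T : H →L[ℂ] H)
    {c : ℝ} (hc : 0 ≤ c) (K : ℕ) (h : ∀ j < K, c ≤ sv T j) :
    (K : ℝ) ^ (1/p) * c ≤ snorm p T := by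
  have h1 : (K : ℝ) * c ^ p ≤ ∑' j, sv T j ^ p := by
    have := Summable.sum_le_tsum (f := fun j => sv T j ^ p) (Finset.range K)
      (fun b _ => Real.rpow_nonneg (sv_nonneg T b) p) (sv_rpow_summable T hp.ne')
    refine le_trans ?_ this
    calc (K : ℝ) * c ^ p = ∑ _j ∈ Finset.range K, c ^ p := by
          rw [Finset.sum_const, Finset.card_range, nsmul_eq_mul]
      _ ≤ ∑ j ∈ Finset.range K, sv T j ^ p :=
          Finset.sum_le_sum (fun j hj => Real.rpow_le_rpow hc
            (h j (Finset.mem_range.mp hj)) hp.le)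
  calc (K : ℝ) ^ (1/p) * c = ((K : ℝ) * c ^ p) ^ (1/p) := by
        rw [Real.mul_rpow (Nat.cast_nonneg K) (Real.rpow_nonneg hc p),
          ← Real.rpow_mul hc, mul_one_div_cancel hp.ne', Real.rpow_one]
    _ ≤ snorm p T := Real.rpow_le_rpow (by positivity) h1 (by positivity)

section Main
variable {p ε : ℝ} (hp : 0 < p) (hp1 : p < 1) (he : 0 < ε) (he1 : ε < 1)

/-- the submatrix -/
def subm (ε : ℝ) (N : ℕ) : Matrix (Fin N) (Fin N) ℂ :=
  Matrix.of fun i j : Fin N =>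
    (((ε + ((2*N+2)*(i:ℕ) : ℕ) - ((2*N+2)*(j:ℕ) : ℕ) : ℝ) : ℂ))⁻¹

/-- the real number in the entry -/
def tv (ε : ℝ) (N : ℕ) (i j : Fin N) : ℝ :=
  ε + ((2*N+2)*(i:ℕ) : ℕ) - ((2*N+2)*(j:ℕ) : ℕ)

lemma subm_apply (ε : ℝ) (N : ℕ) (i j : Fin N) :
    subm ε N i j = ((tv ε N i j : ℝ) : ℂ)⁻¹ := rfl

lemma norm_subm_apply (ε : ℝ) (N : ℕ) (i j : Fin N) :
    ‖subm ε N i j‖ = |tv ε N i j|⁻¹ := by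
  rw [subm_apply, ← Complex.ofReal_inv, Complex.norm_real, Real.norm_eq_abs, abs_inv]

include he he1 in
lemma tv_diag (N : ℕ) (i : Fin N) : tv ε N i i = ε := by
  unfold tv; ring

include he he1 in
lemma tv_off (N : ℕ) (i j : Fin N) (hij : i ≠ j) : (2*N+1 : ℝ) ≤ |tv ε N i j| := by
  unfold tv
  rcases lt_or_gt_of_ne hij with h | h
  · have hn : (2*N+2) * (i:ℕ) + (2*N+2) ≤ (2*N+2) * (j:ℕ) := by
      have : (i:ℕ) + 1 ≤ (j:ℕ) := h
      nlinarith
    have hc : ((2*N+2) * (i:ℕ) : ℝ) + (2*N+2) ≤ ((2*N+2) * (j:ℕ) : ℝ) := by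
      exact_mod_cast hn
    rw [abs_of_nonpos (by push_cast at hc ⊢; nlinarith)]
    push_cast at hc ⊢
    nlinarith
  · have hn : (2*N+2) * (j:ℕ) + (2*N+2) ≤ (2*N+2) * (i:ℕ) := by
      have : (j:ℕ) + 1 ≤ (i:ℕ) := h
      nlinarith
    have hc : ((2*N+2) * (j:ℕ) : ℝ) + (2*N+2) ≤ ((2*N+2) * (i:ℕ) : ℝ) := by
      exact_mod_cast hn
    rw [abs_of_nonneg (by push_cast at hc ⊢; nlinarith)]
    push_cast at hc ⊢
    nlinarith

include he he1 in
lemma tv_lb (N : ℕ) (i j : Fin N) : min ε (1-ε) ≤ |tv ε N i j| := by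
  by_cases hij : i = j
  · subst hij
    rw [tv_diag he he1, abs_of_pos he]
    exact min_le_left _ _
  · refine le_trans ?_ (tv_off he he1 N i j hij)
    have : (1:ℝ) ≤ 2*N+1 := by
      have := Nat.cast_nonneg (α := ℝ) N
      linarith
    have h2 : min ε (1-ε) ≤ 1 := le_trans (min_le_right _ _) (by linarith)
    linarith

include he he1 in
lemma norm_subm_le (N : ℕ) (i j : Fin N) : ‖subm ε N i j‖ ≤ (min ε (1-ε))⁻¹ := by
  rw [norm_subm_apply]
  exact inv_anti₀ (lt_min he (by linarith)) (tv_lb he he1 N i j)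

/-- the test matrix -/
def bmat (N : ℕ) : Matrix (Fin N) (Fin N) ℂ := Matrix.of fun _ _ => ((N:ℂ))⁻¹

/-- diagonal part -/
def dmat (ε : ℝ) (N : ℕ) : Matrix (Fin N) (Fin N) ℂ :=
  ((((N:ℝ)⁻¹ * ε⁻¹ : ℝ) : ℂ)) • (1 : Matrix (Fin N) (Fin N) ℂ)

include he he1 in
lemma fmat_entry_bound (N : ℕ) (hN : 1 ≤ N) (i j : Fin N) :
    ‖(dmat ε N - (subm ε N).hadamard (bmat N)) i j‖ ≤ (2*N+1 : ℝ)⁻¹ * (N:ℝ)⁻¹ := by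
  have hNpos : (0:ℝ) < N := by exact_mod_cast hN
  have h21 : (0:ℝ) < 2*N+1 := by linarith
  by_cases hij : i = j
  · subst hij
    have hX : ((subm ε N).hadamard (bmat N)) i i = ((ε:ℂ))⁻¹ * ((N:ℂ))⁻¹ := by
      show subm ε N i i * bmat N i i = _
      rw [subm_apply, tv_diag he he1, bmat]
      rfl
    have hD : dmat ε N i i = ((N:ℂ))⁻¹ * ((ε:ℂ))⁻¹ := by
      show (((((N:ℝ)⁻¹ * ε⁻¹ : ℝ) : ℂ))) * (1 : Matrix (Fin N) (Fin N) ℂ) i i = _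
      rw [Matrix.one_apply_eq]
      push_cast
      ring
    rw [Matrix.sub_apply, hX, hD]
    rw [show ((N:ℂ))⁻¹ * ((ε:ℂ))⁻¹ - ((ε:ℂ))⁻¹ * ((N:ℂ))⁻¹ = 0 by ring]
    rw [norm_zero]
    positivity
  · have hD : dmat ε N i j = 0 := by
      show (((((N:ℝ)⁻¹ * ε⁻¹ : ℝ) : ℂ))) * (1 : Matrix (Fin N) (Fin N) ℂ) i j = 0
      rw [Matrix.one_apply_ne hij, mul_zero]
    rw [Matrix.sub_apply, hD, zero_sub, norm_neg]
    have : ((subm ε N).hadamard (bmat N)) i j = subm ε N i j * ((N:ℂ))⁻¹ := rfl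
    rw [this, norm_mul, norm_subm_apply]
    have h1 : ‖((N:ℂ))⁻¹‖ = (N:ℝ)⁻¹ := by
      rw [norm_inv, Complex.norm_natCast]
    rw [h1]
    refine mul_le_mul_of_nonneg_right ?_ (by positivity)
    exact inv_anti₀ h21 (tv_off he he1 N i j hij)

include hp he he1 in
lemma sv_lower (N : ℕ) (hN : 1 ≤ N) (j : ℕ) (hj : 2*j < N) :
    (2*N*ε : ℝ)⁻¹ ≤ sv (Matrix.toEuclideanCLM (𝕜 := ℂ) ((subm ε N).hadamard (bmat N))) j := by
  have hNpos : (0:ℝ) < N := by exact_mod_cast hN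
  set X := (subm ε N).hadamard (bmat N) with hXdef
  set F := dmat ε N - X with hFdef
  set TX := Matrix.toEuclideanCLM (𝕜 := ℂ) X
  set TF := Matrix.toEuclideanCLM (𝕜 := ℂ) F
  -- norm of TF
  have hTF : ‖TF‖ ≤ (2*N+1 : ℝ)⁻¹ := by
    have := opNorm_le_card_mul_bound F ((2*N+1 : ℝ)⁻¹ * (N:ℝ)⁻¹) (by positivity)
      (fun i j => fmat_entry_bound he he1 N hN i j)
    refine le_trans this (le_of_eq ?_)
    field_simp
  -- D as smul one
  have hD : Matrix.toEuclideanCLM (𝕜 := ℂ) (dmat ε N)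
      = ((((N:ℝ)⁻¹ * ε⁻¹ : ℝ) : ℂ)) • 1 := by
    rw [dmat, map_smul, map_one]
  have hsplit : Matrix.toEuclideanCLM (𝕜 := ℂ) (dmat ε N) = TX + TF := by
    rw [show dmat ε N = X + F from (add_sub_cancel X (dmat ε N)).symm, map_add]
  have hjj : j + j < Module.finrank ℂ (EuclideanSpace ℂ (Fin N)) := by
    rw [finrank_euclideanSpace_fin]; omega
  have hlow : ‖((((N:ℝ)⁻¹ * ε⁻¹ : ℝ) : ℂ))‖ ≤ sv TX j + ‖TF‖ := by
    calc ‖((((N:ℝ)⁻¹ * ε⁻¹ : ℝ) : ℂ))‖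
        ≤ sv (((((N:ℝ)⁻¹ * ε⁻¹ : ℝ) : ℂ)) • (1 : EuclideanSpace ℂ (Fin N) →L[ℂ] EuclideanSpace ℂ (Fin N))) (j + j) :=
          norm_le_sv_smul_one _ _ hjj
      _ = sv (Matrix.toEuclideanCLM (𝕜 := ℂ) (dmat ε N)) (j + j) := by rw [hD]
      _ = sv (TX + TF) (j + j) := by rw [hsplit]
      _ ≤ sv TX j + sv TF j := sv_add_le TX TF j j
      _ ≤ sv TX j + ‖TF‖ := by
          have := sv_le_norm TF j
          linarith
  have hnorm : ‖((((N:ℝ)⁻¹ * ε⁻¹ : ℝ) : ℂ))‖ = (N:ℝ)⁻¹ * ε⁻¹ := by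
    rw [Complex.norm_real, Real.norm_eq_abs, abs_of_pos (by positivity)]
  rw [hnorm] at hlow
  have h1 : (2*N+1:ℝ)⁻¹ ≤ (2*N*ε)⁻¹ := by
    apply inv_anti₀ (by positivity)
    nlinarith
  have h2 : (N:ℝ)⁻¹ * ε⁻¹ = 2 * (2*N*ε)⁻¹ := by
    field_simp
  have := hTF
  linarith [hlow, h1, h2]

include hp in
lemma bmat_snorm_le (N : ℕ) (hN : 1 ≤ N) : msnorm p (bmat N) ≤ 1 := by
  have hNpos : (0:ℝ) < N := by exact_mod_cast hN
  set TB := Matrix.toEuclideanCLM (𝕜 := ℂ) (bmat N) with hTBdef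
  have hnorm : ‖TB‖ ≤ 1 := by
    have h := opNorm_le_card_mul_bound (bmat N) (N:ℝ)⁻¹ (by positivity)
      (fun i j => le_of_eq (by rw [show bmat N i j = ((N:ℂ))⁻¹ from rfl, norm_inv,
        Complex.norm_natCast]))
    rw [mul_inv_cancel₀ (ne_of_gt hNpos)] at h
    exact h
  have hrank : Module.finrank ℂ (LinearMap.range (TB : EuclideanSpace ℂ (Fin N) →ₗ[ℂ] EuclideanSpace ℂ (Fin N))) ≤ 1 := by
    set v : EuclideanSpace ℂ (Fin N) := (WithLp.equiv 2 (Fin N → ℂ)).symm (fun _ => 1) with hv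
    have hle : LinearMap.range (TB : EuclideanSpace ℂ (Fin N) →ₗ[ℂ] EuclideanSpace ℂ (Fin N)) ≤ ℂ ∙ v := by
      rintro y ⟨x, rfl⟩
      refine Submodule.mem_span_singleton.mpr ⟨∑ k, ((N:ℂ))⁻¹ * x k, ?_⟩
      ext i
      show (∑ k, ((N:ℂ))⁻¹ * x k) * 1 = ∑ k, bmat N i k * x k
      rw [mul_one]
      rfl
    refine le_trans (Submodule.finrank_mono hle) ?_
    rcases eq_or_ne v 0 with hv0 | hv0
    · rw [hv0, Submodule.span_zero_singleton, finrank_bot]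
      norm_num
    · rw [finrank_span_singleton hv0]
  have hzero : ∀ j, 1 ≤ j → sv TB j = 0 := fun j hj =>
    sv_eq_zero_of_rank_le TB j (le_trans hrank hj)
  show snorm p TB ≤ 1
  rw [snorm, tsum_eq_sum (s := ({0} : Finset ℕ)) (fun b hb => by
    rw [hzero b (by simp only [Finset.mem_singleton] at hb; omega), Real.zero_rpow hp.ne'])]
  rw [Finset.sum_singleton]
  refine Real.rpow_le_one (Real.rpow_nonneg (sv_nonneg TB 0) p) ?_ (by positivity)
  refine Real.rpow_le_one (sv_nonneg TB 0) ?_ hp.le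
  rw [sv_zero_eq_norm TB]
  exact hnorm

include hp he he1 in
lemma schur_lower (N : ℕ) (hN : 1 ≤ N) :
    ((((N+1)/2 : ℕ) : ℝ)) ^ (1/p) * (2*N*ε : ℝ)⁻¹ ≤ schurNorm p (subm ε N) := by
  have hNpos : (0:ℝ) < N := by exact_mod_cast hN
  set Ca := (min ε (1-ε))⁻¹ with hCa
  have hCapos : 0 < Ca := by
    rw [hCa]
    exact inv_pos.mpr (lt_min he (by linarith))
  have hbdd : BddAbove {x | ∃ B : Matrix (Fin N) (Fin N) ℂ,
      msnorm p B ≤ 1 ∧ x = msnorm p ((subm ε N).hadamard B)} := by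
    refine ⟨(N:ℝ)^(1/p) * ((N:ℝ) * Ca), ?_⟩
    rintro x ⟨B', hB'1, rfl⟩
    have hopB : ‖Matrix.toEuclideanCLM (𝕜 := ℂ) B'‖ ≤ 1 :=
      le_trans (norm_le_snorm hp _) hB'1
    have hent : ∀ i j, ‖((subm ε N).hadamard B') i j‖ ≤ Ca := by
      intro i j
      have : ((subm ε N).hadamard B') i j = subm ε N i j * B' i j := rfl
      rw [this, norm_mul]
      calc ‖subm ε N i j‖ * ‖B' i j‖ ≤ Ca * 1 := by
            refine mul_le_mul (norm_subm_le he he1 N i j) ?_ (norm_nonneg _) hCapos.le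
            exact le_trans (entry_norm_le_opNorm B' i j) hopB
        _ = Ca := mul_one Ca
    have hop := opNorm_le_card_mul_bound _ _ (by positivity) hent
    have := snorm_le_of_norm_le hp (Matrix.toEuclideanCLM (𝕜 := ℂ) ((subm ε N).hadamard B')) hop
    rwa [finrank_euclideanSpace_fin] at this
  have hmem : msnorm p ((subm ε N).hadamard (bmat N)) ∈ {x | ∃ B : Matrix (Fin N) (Fin N) ℂ,
      msnorm p B ≤ 1 ∧ x = msnorm p ((subm ε N).hadamard B)} :=
    ⟨bmat N, bmat_snorm_le hp N hN, rfl⟩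
  refine le_trans ?_ (le_csSup hbdd hmem)
  refine le_trans (le_of_eq rfl) ?_
  have hKj : ∀ j < (N+1)/2, (2*N*ε : ℝ)⁻¹ ≤
      sv (Matrix.toEuclideanCLM (𝕜 := ℂ) ((subm ε N).hadamard (bmat N))) j := by
    intro j hj
    exact sv_lower hp he he1 N hN j (by omega)
  exact le_snorm_of_sv_ge hp _ (by positivity) ((N+1)/2) hKj

include hp hp1 he he1 in
lemma exists_big (Kb : ℝ) : ∃ N : ℕ, 1 ≤ N ∧
    Kb ≤ ((((N+1)/2 : ℕ)):ℝ) ^ (1/p) * (2*N*ε : ℝ)⁻¹ := by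
  set s := (2:ℝ) ^ (1/p) with hs
  have hspos : 0 < s := Real.rpow_pos_of_pos two_pos _
  set C := max 1 (s * (2*ε) * Kb) with hC
  have hq : 0 < 1/p - 1 := sub_pos.mpr (one_lt_one_div hp hp1)
  have htend : Filter.Tendsto (fun n : ℕ => (n:ℝ) ^ (1/p - 1)) Filter.atTop Filter.atTop :=
    (tendsto_rpow_atTop hq).comp tendsto_natCast_atTop_atTop
  obtain ⟨N, hNC, hN1⟩ :=
    ((htend.eventually_ge_atTop C).and (Filter.eventually_ge_atTop 1)).exists
  refine ⟨N, hN1, ?_⟩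
  have hNpos : (0:ℝ) < N := by exact_mod_cast hN1
  set K := (N+1)/2 with hK
  have h1 : (N:ℝ)/2 ≤ (K:ℝ) := by
    have : N ≤ 2*K := by omega
    have := (Nat.cast_le (α := ℝ)).mpr this
    push_cast at this
    linarith
  have h2 : ((N:ℝ)/2)^(1/p) ≤ (K:ℝ)^(1/p) :=
    Real.rpow_le_rpow (by positivity) h1 (by positivity)
  have h3 : ((N:ℝ)/2)^(1/p) = (N:ℝ)^(1/p) / s := by
    rw [hs, Real.div_rpow (Nat.cast_nonneg N) (by norm_num)]
  have h4 : (N:ℝ)^(1/p) = (N:ℝ)^(1/p-1) * N := by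
    rw [Real.rpow_sub hNpos, Real.rpow_one, div_mul_cancel₀]
    exact ne_of_gt hNpos
  set u := (N:ℝ)^(1/p-1) with hu
  have hCu : C ≤ u := hNC
  have hstep : u / (s * (2*ε)) ≤ ((N:ℝ)/2)^(1/p) * (2*N*ε : ℝ)⁻¹ := by
    refine le_of_eq ?_
    rw [h3, h4]
    have hs0 : s ≠ 0 := ne_of_gt hspos
    have hN0 : (N:ℝ) ≠ 0 := ne_of_gt hNpos
    have he0 : ε ≠ 0 := ne_of_gt he
    field_simp
  have hfinal : Kb ≤ u / (s * (2*ε)) := by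
    rw [le_div_iff₀ (by positivity)]
    calc Kb * (s * (2*ε)) = s * (2*ε) * Kb := by ring
      _ ≤ C := le_max_right _ _
      _ ≤ u := hCu
  calc Kb ≤ u / (s * (2*ε)) := hfinal
    _ ≤ ((N:ℝ)/2)^(1/p) * (2*N*ε : ℝ)⁻¹ := hstep
    _ ≤ (K:ℝ)^(1/p) * (2*N*ε : ℝ)⁻¹ :=
        mul_le_mul_of_nonneg_right h2 (by positivity)

/-- the Toeplitz matrix `{1/(ε+j−k)}` is not an `L_p`-bounded Schur
multiplier for `0 < p < 1`. -/
theorem stmt7 (p ε : ℝ) (hp : 0 < p) (hp1 : p < 1) (he : 0 < ε) (he1 : ε < 1) :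
    schurNormInf p (fun j k : ℕ => (((ε + j - k : ℝ) : ℂ))⁻¹) = ⊤ := by
  by_contra hne
  set A := fun j k : ℕ => (((ε + j - k : ℝ) : ℂ))⁻¹ with hA
  have hub : ∀ (n : ℕ) (r c : Fin n → ℕ),
      ENNReal.ofReal (schurNorm p (Matrix.of fun i j => A (r i) (c j))) ≤ schurNormInf p A :=
    by
    intro n r c
    rw [schurNormInf]
    refine le_trans ?_ (le_iSup (fun n : ℕ => ⨆ (r : Fin n → ℕ) (c : Fin n → ℕ),
      ENNReal.ofReal (schurNorm p (Matrix.of fun i j => A (r i) (c j)))) n)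
    refine le_trans ?_ (le_iSup (fun r' : Fin n → ℕ => ⨆ (c : Fin n → ℕ),
      ENNReal.ofReal (schurNorm p (Matrix.of fun i j => A (r' i) (c j)))) r)
    exact le_iSup (fun c' : Fin n → ℕ =>
      ENNReal.ofReal (schurNorm p (Matrix.of fun i j => A (r i) (c' j)))) c
  obtain ⟨N, hN1, hN2⟩ := exists_big hp hp1 he he1 ((schurNormInf p A).toReal + 1)
  have h1 : ((schurNormInf p A).toReal + 1) ≤ schurNorm p (subm ε N) :=
    le_trans hN2 (schur_lower hp he he1 N hN1)
  have h2 := hub N (fun i => (2*N+2)*(i:ℕ)) (fun j => (2*N+2)*(j:ℕ))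
  have hsub : (Matrix.of fun i j : Fin N =>
      A ((2*N+2)*(i:ℕ)) ((2*N+2)*(j:ℕ))) = subm ε N := by
    ext i j
    show A ((2*N+2)*(i:ℕ)) ((2*N+2)*(j:ℕ)) = subm ε N i j
    rw [hA, subm_apply, tv]
  rw [hsub] at h2
  have h3 : schurNorm p (subm ε N) ≤ (schurNormInf p A).toReal :=
    (ENNReal.ofReal_le_iff_le_toReal hne).mp h2
  linarith

end Main


end Paper
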